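/- The attack (u, u^GNSS) is undetectable if and only if, for all times t ≥ 0, u(t)ᵀp(t) = u_n(t)ᵀp_n(t) + ‖v_n(t)‖² − ‖v(t)‖² and u^GNSS(t) = p_n(t) − p(t). -/

import Mathlib

open scoped InnerProductSpace

noncomputable abbrev E2 := EuclideanSpace ℝ (Fin 2)

/-- An attack `(u, uGNSS)` is undetectable if the spoofed GNSS reading
`p + uGNSS` equals the nominal reading `pₙ` and the RSSI reading `pᵀp`
equals the nominal reading `pₙᵀpₙ` at all times `t ≥ 0`. -/
def Undetectable (pn p uGNSS : ℝ → E2) : Prop :=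
  ∀ t ≥ (0 : ℝ), p t + uGNSS t = pn t ∧ ⟪p t, p t⟫_ℝ = ⟪pn t, pn t⟫_ℝ

/-- If a real function vanishes on `Ici 0` and has derivative `f'` at `t ∈ Ici 0`,
then `f' = 0`. -/
lemma deriv_zero_of_eq_zero_on_Ici {f : ℝ → ℝ} {f' t : ℝ} (ht : 0 ≤ t)
    (hf : HasDerivAt f f' t) (h0 : ∀ s ∈ Set.Ici (0 : ℝ), f s = 0) : f' = 0 := by
  have h1 : HasDerivWithinAt f f' (Set.Ici 0) t := hf.hasDerivWithinAt
  have h2 : HasDerivWithinAt f 0 (Set.Ici 0) t :=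
    (hasDerivWithinAt_const t (Set.Ici (0 : ℝ)) (0 : ℝ)).congr h0 (h0 t ht)
  have hu : UniqueDiffWithinAt ℝ (Set.Ici (0 : ℝ)) t := uniqueDiffOn_Ici 0 t ht
  rw [← h1.derivWithin hu, h2.derivWithin hu]

/-- If a real function has derivative `0` at every `t ≥ 0` and vanishes at `0`,
it vanishes on `Ici 0`. -/
lemma eq_zero_of_deriv_zero_on_Ici {f : ℝ → ℝ}
    (hf : ∀ s ≥ (0 : ℝ), HasDerivAt f 0 s) (h0 : f 0 = 0) :
    ∀ t ≥ (0 : ℝ), f t = 0 := by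
  intro t ht
  have hcont : ContinuousOn f (Set.Icc 0 t) := fun x hx =>
    ((hf x hx.1).continuousAt).continuousWithinAt
  have := constant_of_has_deriv_right_zero hcont
    (fun x hx => ((hf x hx.1).hasDerivWithinAt)) t (Set.right_mem_Icc.2 ht)
  rw [this, h0]

theorem implicit_characterization_undetectable
    (umax : ℝ) (humax : 0 < umax)
    (pn vn un p v u uGNSS : ℝ → E2)
    -- nominal double-integrator dynamics: ṗₙ = vₙ, v̇ₙ = uₙ
    (hpn : ∀ t ≥ (0 : ℝ), HasDerivAt pn (vn t) t)
    (hvn : ∀ t ≥ (0 : ℝ), HasDerivAt vn (un t) t)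
    -- attacked double-integrator dynamics: ṗ = v, v̇ = u
    (hp : ∀ t ≥ (0 : ℝ), HasDerivAt p (v t) t)
    (hv : ∀ t ≥ (0 : ℝ), HasDerivAt v (u t) t)
    -- control bounds
    (hun : ∀ t ≥ (0 : ℝ), ‖un t‖ ≤ umax)
    (hu : ∀ t ≥ (0 : ℝ), ‖u t‖ ≤ umax)
    -- equal initial conditions
    (hp0 : p 0 = pn 0) (hv0 : v 0 = vn 0) :
    Undetectable pn p uGNSS ↔
      ∀ t ≥ (0 : ℝ),
        ⟪u t, p t⟫_ℝ = ⟪un t, pn t⟫_ℝ + ‖vn t‖ ^ 2 - ‖v t‖ ^ 2 ∧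
        uGNSS t = pn t - p t := by
  -- abbreviations for the two scalar functions
  set F : ℝ → ℝ := fun s => ⟪p s, p s⟫_ℝ - ⟪pn s, pn s⟫_ℝ with hF
  set G : ℝ → ℝ := fun s => ⟪v s, p s⟫_ℝ - ⟪vn s, pn s⟫_ℝ with hG
  have hFd : ∀ s ≥ (0 : ℝ), HasDerivAt F (2 * G s) s := by
    intro s hs
    have h1 := ((hp s hs).inner ℝ (hp s hs)).sub ((hpn s hs).inner ℝ (hpn s hs))
    refine h1.congr_deriv ?_
    simp only [hG, real_inner_comm (p s), real_inner_comm (pn s)]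
    ring
  have hGd : ∀ s ≥ (0 : ℝ),
      HasDerivAt G (⟪u s, p s⟫_ℝ + ‖v s‖ ^ 2 - (⟪un s, pn s⟫_ℝ + ‖vn s‖ ^ 2)) s := by
    intro s hs
    have h1 := ((hv s hs).inner ℝ (hp s hs)).sub ((hvn s hs).inner ℝ (hpn s hs))
    refine h1.congr_deriv ?_
    simp only [real_inner_self_eq_norm_sq]
    ring
  constructor
  · intro h t ht
    have hF0 : ∀ s ∈ Set.Ici (0 : ℝ), F s = 0 := by
      intro s hs; have := (h s hs).2; simp only [hF, this, sub_self]
    have hG0 : ∀ s ∈ Set.Ici (0 : ℝ), G s = 0 := by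
      intro s hs
      have h2 : (2 : ℝ) * G s = 0 :=
        deriv_zero_of_eq_zero_on_Ici hs (hFd s hs) hF0
      linarith
    have h3 : ⟪u t, p t⟫_ℝ + ‖v t‖ ^ 2 - (⟪un t, pn t⟫_ℝ + ‖vn t‖ ^ 2) = 0 :=
      deriv_zero_of_eq_zero_on_Ici ht (hGd t ht) hG0
    constructor
    · linarith
    · have := (h t ht).1
      have : uGNSS t = pn t - p t := by
        rw [← this]; abel
      exact this
  · intro h t ht
    have hG0 : ∀ s ≥ (0 : ℝ), G s = 0 := by
      apply eq_zero_of_deriv_zero_on_Ici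
      · intro s hs
        have h3 := hGd s hs
        have h4 := (h s hs).1
        have : ⟪u s, p s⟫_ℝ + ‖v s‖ ^ 2 - (⟪un s, pn s⟫_ℝ + ‖vn s‖ ^ 2) = 0 := by
          linarith
        rwa [this] at h3
      · simp [hG, hp0, hv0]
    have hF0 : ∀ s ≥ (0 : ℝ), F s = 0 := by
      apply eq_zero_of_deriv_zero_on_Ici
      · intro s hs
        have h3 := hFd s hs
        rw [hG0 s hs] at h3
        simpa using h3
      · simp [hF, hp0]
    refine ⟨?_, ?_⟩
    · have h4 := (h t ht).2
      rw [h4]; abel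
    · have := hF0 t ht
      simp only [hF, sub_eq_zero] at this
      exact this
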